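/- For probability measures μ, ν on ℝ with cumulative distribution functions F_μ, F_ν and generalized inverses F_μ⁻¹(t) = inf{x : F_μ(x) > t}, the optimal value of the 1D quadratic optimal transport problem equals ∫₀¹ (F_μ⁻¹(s) − F_ν⁻¹(s))² ds, i.e., min_{σ ∈ ADM(μ,ν)} ∫_{ℝ×ℝ} (x−y)² dσ(x,y) = ∫₀¹ (F_μ⁻¹(s) − F_ν⁻¹(s))² ds. -/

import Mathlib

open MeasureTheory

/-- The cumulative distribution function `F_μ(x) = μ((−∞, x])`. -/
noncomputable def cdfFun (μ : Measure ℝ) (x : ℝ) : ℝ := (μ (Set.Iic x)).toReal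

/-- The generalized inverse `F_μ⁻¹(t) = inf {x : F_μ(x) > t}`. -/
noncomputable def quantileFun (μ : Measure ℝ) (t : ℝ) : ℝ :=
  sInf {x : ℝ | t < cdfFun μ x}

namespace OneDOT

open Set Filter ProbabilityTheory
open scoped ENNReal

variable (μ : Measure ℝ) [IsProbabilityMeasure μ]

lemma cdfFun_eq (x : ℝ) : cdfFun μ x = cdf μ x := (cdf_eq_real μ x).symm

lemma cdfFun_le_one (x : ℝ) : cdfFun μ x ≤ 1 := by
  rw [cdfFun_eq]; exact cdf_le_one μ x

lemma cdfFun_mono : Monotone (cdfFun μ) := by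
  intro a b hab
  rw [cdfFun_eq, cdfFun_eq]
  exact monotone_cdf μ hab

lemma quantile_set_nonempty {t : ℝ} (ht : t < 1) : {x : ℝ | t < cdfFun μ x}.Nonempty := by
  obtain ⟨x, hx⟩ := ((tendsto_cdf_atTop μ).eventually_const_lt ht).exists
  exact ⟨x, by rwa [mem_setOf_eq, cdfFun_eq]⟩

lemma quantile_set_bddBelow {t : ℝ} (ht : 0 < t) : BddBelow {x : ℝ | t < cdfFun μ x} := by
  obtain ⟨x0, hx0⟩ := ((tendsto_cdf_atBot μ).eventually_lt_const ht).exists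
  refine ⟨x0, fun y hy => ?_⟩
  rw [mem_setOf_eq, cdfFun_eq] at hy
  by_contra hlt
  push_neg at hlt
  exact absurd hy (not_lt.2 ((monotone_cdf μ hlt.le).trans hx0.le))

lemma quantile_le_of_lt {t x : ℝ} (ht : 0 < t) (h : t < cdfFun μ x) :
    quantileFun μ t ≤ x :=
  csInf_le (quantile_set_bddBelow μ ht) h

lemma le_cdf_of_quantile_le {t x : ℝ} (ht1 : t < 1) (h : quantileFun μ t ≤ x) :
    t ≤ cdfFun μ x := by
  have key : ∀ r : Ioi x, t ≤ cdf μ r := by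
    rintro ⟨z, hz⟩
    obtain ⟨y, hy, hyz⟩ := exists_lt_of_csInf_lt (quantile_set_nonempty μ ht1)
      (lt_of_le_of_lt h hz)
    rw [mem_setOf_eq, cdfFun_eq] at hy
    exact hy.le.trans (monotone_cdf μ hyz.le)
  rw [cdfFun_eq, ← (cdf μ).iInf_Ioi_eq x]
  exact le_ciInf key

lemma quantile_monotoneOn : MonotoneOn (quantileFun μ) (Ioo 0 1) := by
  intro a ha b hb hab
  exact csInf_le_csInf (quantile_set_bddBelow μ ha.1) (quantile_set_nonempty μ hb.2)
    (fun x hx => lt_of_le_of_lt hab hx)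

lemma aemeasurable_of_monotoneOn {f : ℝ → ℝ} (hf : MonotoneOn f (Ioo 0 1)) :
    AEMeasurable f (volume.restrict (Ioo (0:ℝ) 1)) := by
  classical
  have hhalf : (1/2 : ℝ) ∈ Ioo (0:ℝ) 1 := by norm_num
  refine ⟨fun u => if u ∈ Ioo (0:ℝ) 1 then f u else f (1/2), ?_, ?_⟩
  · apply measurable_of_Iic
    intro x
    have hset : MeasurableSet (Ioo (0:ℝ) 1 ∩ f ⁻¹' Iic x) := by
      apply Set.OrdConnected.measurableSet
      constructor
      rintro a ⟨ha, hax⟩ b ⟨hb, hbx⟩ c hc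
      refine ⟨⟨lt_of_lt_of_le ha.1 hc.1, lt_of_le_of_lt hc.2 hb.2⟩, ?_⟩
      have hcI : c ∈ Ioo (0:ℝ) 1 := ⟨lt_of_lt_of_le ha.1 hc.1, lt_of_le_of_lt hc.2 hb.2⟩
      exact le_trans (hf hcI hb hc.2) hbx
    by_cases hc : f (1/2) ≤ x
    · have : (fun u => if u ∈ Ioo (0:ℝ) 1 then f u else f (1/2)) ⁻¹' Iic x
          = (Ioo (0:ℝ) 1 ∩ f ⁻¹' Iic x) ∪ (Ioo (0:ℝ) 1)ᶜ := by
        ext u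
        simp only [mem_preimage, mem_Iic, mem_union, mem_inter_iff, mem_compl_iff]
        by_cases hu : u ∈ Ioo (0:ℝ) 1
        · rw [if_pos hu]; tauto
        · rw [if_neg hu]; tauto
      rw [this]
      exact hset.union measurableSet_Ioo.compl
    · have : (fun u => if u ∈ Ioo (0:ℝ) 1 then f u else f (1/2)) ⁻¹' Iic x
          = Ioo (0:ℝ) 1 ∩ f ⁻¹' Iic x := by
        ext u
        simp only [mem_preimage, mem_Iic, mem_inter_iff]
        by_cases hu : u ∈ Ioo (0:ℝ) 1
        · rw [if_pos hu]; tauto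
        · rw [if_neg hu]; tauto
      rw [this]
      exact hset
  · filter_upwards [ae_restrict_mem measurableSet_Ioo] with u hu
    simp [hu]

lemma aemeasurable_quantile : AEMeasurable (quantileFun μ) (volume.restrict (Ioo (0:ℝ) 1)) :=
  aemeasurable_of_monotoneOn (quantile_monotoneOn μ)

lemma map_quantile : (volume.restrict (Ioo (0:ℝ) 1)).map (quantileFun μ) = μ := by
  have hQ := aemeasurable_quantile μ
  have hprob : IsProbabilityMeasure ((volume.restrict (Ioo (0:ℝ) 1)).map (quantileFun μ)) := by
    constructor
    rw [Measure.map_apply_of_aemeasurable hQ MeasurableSet.univ, preimage_univ,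
      Measure.restrict_apply_univ, Real.volume_Ioo]
    norm_num
  refine Measure.ext_of_Iic _ _ fun x => ?_
  rw [Measure.map_apply_of_aemeasurable hQ measurableSet_Iic,
      Measure.restrict_apply' measurableSet_Ioo]
  have hsub1 : Ioo (0:ℝ) (cdfFun μ x) ⊆ quantileFun μ ⁻¹' Iic x ∩ Ioo 0 1 := by
    rintro u ⟨hu0, hux⟩
    exact ⟨quantile_le_of_lt μ hu0 hux, hu0, lt_of_lt_of_le hux (cdfFun_le_one μ x)⟩
  have hsub2 : quantileFun μ ⁻¹' Iic x ∩ Ioo 0 1 ⊆ Ioc 0 (cdfFun μ x) := by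
    rintro u ⟨hux, hu0, hu1⟩
    exact ⟨hu0, le_cdf_of_quantile_le μ hu1 hux⟩
  have h1 := measure_mono (μ := volume) hsub1
  have h2 := measure_mono (μ := volume) hsub2
  rw [Real.volume_Ioo] at h1
  rw [Real.volume_Ioc] at h2
  have heq : volume (quantileFun μ ⁻¹' Iic x ∩ Ioo 0 1) = ENNReal.ofReal (cdfFun μ x) := by
    refine le_antisymm (by simpa using h2) (by simpa using h1)
  rw [heq, cdfFun]
  exact ENNReal.ofReal_toReal (measure_ne_top μ _)


/-! ### The auxiliary function `phi` -/

noncomputable def phi (x s : ℝ) : ℝ :=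
  (if s < x then (1:ℝ) else 0) - (if s < 0 then (1:ℝ) else 0)

lemma measurable_phi : Measurable (fun p : ℝ × ℝ => phi p.1 p.2) := by
  classical
  have h1 : Measurable fun p : ℝ × ℝ => if p.2 < p.1 then (1:ℝ) else 0 :=
    Measurable.ite (measurableSet_lt measurable_snd measurable_fst)
      measurable_const measurable_const
  have h2 : Measurable fun p : ℝ × ℝ => if p.2 < 0 then (1:ℝ) else 0 :=
    Measurable.ite (measurableSet_lt measurable_snd measurable_const)
      measurable_const measurable_const
  exact h1.sub h2

lemma phi_eq (x s : ℝ) :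
    phi x s = (Ico (0:ℝ) x).indicator (fun _ => (1:ℝ)) s
      - (Ico x 0).indicator (fun _ => (1:ℝ)) s := by
  simp only [phi, Set.indicator_apply, mem_Ico]
  rcases lt_or_ge s x with h1 | h1
  · rcases lt_or_ge s 0 with h2 | h2
    · simp [h1, h2, not_le.mpr h1, not_le.mpr h2]
    · simp [h1, h2, not_lt.mpr h2]
  · rcases lt_or_ge s 0 with h2 | h2
    · simp [h2, h1, not_lt.mpr h1]
    · simp [not_lt.mpr h1, not_lt.mpr h2]

lemma abs_phi_le (x s : ℝ) : |phi x s| ≤ 1 := by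
  simp only [phi]
  split_ifs <;> norm_num

lemma integrable_indicator_Ico (a b : ℝ) :
    Integrable ((Ico a b).indicator (fun _ => (1:ℝ))) volume := by
  rw [integrable_indicator_iff measurableSet_Ico]
  exact integrableOn_const (by rw [Real.volume_Ico]; exact ENNReal.ofReal_ne_top)

lemma integrable_phi (x : ℝ) : Integrable (fun s => phi x s) volume := by
  have : (fun s => phi x s) = fun s => (Ico (0:ℝ) x).indicator (fun _ => (1:ℝ)) s
      - (Ico x 0).indicator (fun _ => (1:ℝ)) s := funext fun s => phi_eq x s
  rw [this]
  exact (integrable_indicator_Ico 0 x).sub (integrable_indicator_Ico x 0)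

lemma integral_phi (x : ℝ) : ∫ s, phi x s = x := by
  have : (fun s => phi x s) = fun s => (Ico (0:ℝ) x).indicator (fun _ => (1:ℝ)) s
      - (Ico x 0).indicator (fun _ => (1:ℝ)) s := funext fun s => phi_eq x s
  rw [this, integral_sub (integrable_indicator_Ico 0 x) (integrable_indicator_Ico x 0)]
  have e1 : ∫ s, (Ico (0:ℝ) x).indicator (fun _ => (1:ℝ)) s = (volume (Ico (0:ℝ) x)).toReal := by
    exact integral_indicator_one (measurableSet_Ico (a := (0:ℝ)) (b := x))
  have e2 : ∫ s, (Ico x (0:ℝ)).indicator (fun _ => (1:ℝ)) s = (volume (Ico x (0:ℝ))).toReal := by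
    exact integral_indicator_one (measurableSet_Ico (a := x) (b := (0:ℝ)))
  rw [e1, e2, Real.volume_Ico, Real.volume_Ico]
  rcases le_or_gt 0 x with h | h
  · rw [ENNReal.toReal_ofReal (by linarith), ENNReal.ofReal_eq_zero.2 (by linarith),
      ENNReal.toReal_zero]
    ring
  · rw [ENNReal.ofReal_eq_zero.2 (by linarith : x - 0 ≤ 0), ENNReal.toReal_zero,
      ENNReal.toReal_ofReal (by linarith)]
    ring

lemma lintegral_abs_phi (x : ℝ) :
    ∫⁻ s, ENNReal.ofReal |phi x s| = ENNReal.ofReal |x| := by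
  rcases le_or_gt 0 x with h | h
  · have : ∀ s, ENNReal.ofReal |phi x s| = (Ico (0:ℝ) x).indicator (fun _ => (1:ℝ≥0∞)) s := by
      intro s
      rw [phi_eq]
      by_cases hs : s ∈ Ico (0:ℝ) x
      · have : s ∉ Ico x (0:ℝ) := by
          simp only [mem_Ico] at *
          intro hh; linarith
        simp [hs, this, Set.indicator_of_mem, Set.indicator_of_notMem]
      · by_cases hs2 : s ∈ Ico x (0:ℝ)
        · simp only [mem_Ico] at hs2
          linarith
        · simp [hs, hs2, Set.indicator_of_notMem]
    simp_rw [this]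
    rw [lintegral_indicator measurableSet_Ico, setLIntegral_one, Real.volume_Ico]
    rw [abs_of_nonneg h, sub_zero]
  · have : ∀ s, ENNReal.ofReal |phi x s| = (Ico x (0:ℝ)).indicator (fun _ => (1:ℝ≥0∞)) s := by
      intro s
      rw [phi_eq]
      by_cases hs : s ∈ Ico x (0:ℝ)
      · have : s ∉ Ico (0:ℝ) x := by
          simp only [mem_Ico] at *
          intro hh; linarith
        simp [hs, this, Set.indicator_of_mem, Set.indicator_of_notMem]
      · by_cases hs2 : s ∈ Ico (0:ℝ) x
        · simp only [mem_Ico] at hs2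
          linarith
        · simp [hs, hs2, Set.indicator_of_notMem]
    simp_rw [this]
    rw [lintegral_indicator measurableSet_Ico, setLIntegral_one, Real.volume_Ico]
    rw [abs_of_neg h]
    congr 1
    ring


/-! ### Couplings -/

lemma coupling_isProb {σ : Measure (ℝ × ℝ)} (hσ1 : σ.map Prod.fst = μ) :
    IsProbabilityMeasure σ := by
  refine ⟨?_⟩
  have h : σ univ = μ univ := by
    rw [← hσ1, Measure.map_apply measurable_fst MeasurableSet.univ, preimage_univ]
  rw [h, measure_univ]

lemma coupling_integrable_sq_fst {σ : Measure (ℝ × ℝ)} (hσ1 : σ.map Prod.fst = μ)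
    (hμ2 : Integrable (fun x => x ^ 2) μ) : Integrable (fun z : ℝ × ℝ => z.1 ^ 2) σ := by
  have h := hμ2
  rw [← hσ1, integrable_map_measure ((continuous_pow 2).measurable.aestronglyMeasurable)
    measurable_fst.aemeasurable] at h
  exact h

lemma coupling_integrable_sq_snd {σ : Measure (ℝ × ℝ)} (hσ2 : σ.map Prod.snd = μ)
    (hμ2 : Integrable (fun x => x ^ 2) μ) : Integrable (fun z : ℝ × ℝ => z.2 ^ 2) σ := by
  have h := hμ2
  rw [← hσ2, integrable_map_measure ((continuous_pow 2).measurable.aestronglyMeasurable)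
    measurable_snd.aemeasurable] at h
  exact h

lemma coupling_integrable_mul {σ : Measure (ℝ × ℝ)}
    (hx2 : Integrable (fun z : ℝ × ℝ => z.1 ^ 2) σ)
    (hy2 : Integrable (fun z : ℝ × ℝ => z.2 ^ 2) σ) :
    Integrable (fun z : ℝ × ℝ => z.1 * z.2) σ := by
  refine (hx2.add hy2).mono' ((measurable_fst.mul measurable_snd).aestronglyMeasurable)
    (ae_of_all _ fun z => ?_)
  simp only [Pi.add_apply, Real.norm_eq_abs, abs_mul]
  nlinarith [sq_nonneg (|z.1| - |z.2|), sq_abs z.1, sq_abs z.2, abs_nonneg z.1, abs_nonneg z.2,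
    mul_nonneg (abs_nonneg z.1) (abs_nonneg z.2)]

lemma integral_sq_sub {σ : Measure (ℝ × ℝ)} [IsProbabilityMeasure σ]
    (hx2 : Integrable (fun z : ℝ × ℝ => z.1 ^ 2) σ)
    (hy2 : Integrable (fun z : ℝ × ℝ => z.2 ^ 2) σ) :
    ∫ z : ℝ × ℝ, (z.1 - z.2) ^ 2 ∂σ
      = ∫ z : ℝ × ℝ, z.1 ^ 2 ∂σ + ∫ z : ℝ × ℝ, z.2 ^ 2 ∂σ
        - 2 * ∫ z : ℝ × ℝ, z.1 * z.2 ∂σ := by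
  have hxy := coupling_integrable_mul hx2 hy2
  have hfe : (fun z : ℝ × ℝ => (z.1 - z.2) ^ 2)
      = fun z => z.1 ^ 2 + z.2 ^ 2 - 2 * (z.1 * z.2) := by
    funext z; ring
  have hsum : Integrable (fun z : ℝ × ℝ => z.1 ^ 2 + z.2 ^ 2) σ := hx2.add hy2
  have h2xy : Integrable (fun z : ℝ × ℝ => 2 * (z.1 * z.2)) σ := hxy.const_mul 2
  rw [hfe, integral_sub hsum h2xy, integral_add hx2 hy2, integral_const_mul]

/-! ### The expansion of `∫ phi * phi` -/

lemma measurableSet_quadrant (s t : ℝ) :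
    MeasurableSet {z : ℝ × ℝ | s < z.1 ∧ t < z.2} := by
  have : {z : ℝ × ℝ | s < z.1 ∧ t < z.2}
      = (Prod.fst ⁻¹' Ioi s) ∩ (Prod.snd ⁻¹' Ioi t) := rfl
  rw [this]
  exact (measurable_fst measurableSet_Ioi).inter (measurable_snd measurableSet_Ioi)

lemma integrable_indicator_one_prob {σ : Measure (ℝ × ℝ)} [IsProbabilityMeasure σ]
    {E : Set (ℝ × ℝ)} (hE : MeasurableSet E) :
    Integrable (E.indicator (fun _ => (1 : ℝ))) σ := by
  rw [integrable_indicator_iff hE]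
  exact integrableOn_const (measure_ne_top σ E)

lemma integral_phi_mul (σ : Measure (ℝ × ℝ)) [IsProbabilityMeasure σ] (s t : ℝ) :
    ∫ z : ℝ × ℝ, phi z.1 s * phi z.2 t ∂σ
      = (σ {z : ℝ × ℝ | s < z.1 ∧ t < z.2}).toReal
        - (if t < 0 then (1:ℝ) else 0) * (σ {z : ℝ × ℝ | s < z.1}).toReal
        - (if s < 0 then (1:ℝ) else 0) * (σ {z : ℝ × ℝ | t < z.2}).toReal
        + (if s < 0 then (1:ℝ) else 0) * (if t < 0 then (1:ℝ) else 0) := by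
  classical
  have hE : MeasurableSet {z : ℝ × ℝ | s < z.1 ∧ t < z.2} := measurableSet_quadrant s t
  have hE1 : MeasurableSet {z : ℝ × ℝ | s < z.1} := measurable_fst measurableSet_Ioi
  have hE2 : MeasurableSet {z : ℝ × ℝ | t < z.2} := measurable_snd measurableSet_Ioi
  have hpt : ∀ z : ℝ × ℝ, phi z.1 s * phi z.2 t
      = {z : ℝ × ℝ | s < z.1 ∧ t < z.2}.indicator (fun _ => (1:ℝ)) z
        - (if t < 0 then (1:ℝ) else 0) * {z : ℝ × ℝ | s < z.1}.indicator (fun _ => (1:ℝ)) z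
        - (if s < 0 then (1:ℝ) else 0) * {z : ℝ × ℝ | t < z.2}.indicator (fun _ => (1:ℝ)) z
        + (if s < 0 then (1:ℝ) else 0) * (if t < 0 then (1:ℝ) else 0) := by
    intro z
    simp only [phi, Set.indicator_apply, mem_setOf_eq]
    by_cases h1 : s < z.1 <;> by_cases h2 : t < z.2 <;> by_cases h3 : s < 0 <;>
      by_cases h4 : t < 0 <;> simp [h1, h2, h3, h4] <;> norm_num
  have hA := integrable_indicator_one_prob (σ := σ) hE
  have hB : Integrable (fun z : ℝ × ℝ =>
      (if t < 0 then (1:ℝ) else 0) * {z : ℝ × ℝ | s < z.1}.indicator (fun _ => (1:ℝ)) z) σ :=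
    (integrable_indicator_one_prob (σ := σ) hE1).const_mul _
  have hC : Integrable (fun z : ℝ × ℝ =>
      (if s < 0 then (1:ℝ) else 0) * {z : ℝ × ℝ | t < z.2}.indicator (fun _ => (1:ℝ)) z) σ :=
    (integrable_indicator_one_prob (σ := σ) hE2).const_mul _
  have hAB : Integrable (fun z : ℝ × ℝ =>
      {z : ℝ × ℝ | s < z.1 ∧ t < z.2}.indicator (fun _ => (1:ℝ)) z
        - (if t < 0 then (1:ℝ) else 0) * {z : ℝ × ℝ | s < z.1}.indicator (fun _ => (1:ℝ)) z) σ :=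
    hA.sub hB
  have hABC : Integrable (fun z : ℝ × ℝ =>
      {z : ℝ × ℝ | s < z.1 ∧ t < z.2}.indicator (fun _ => (1:ℝ)) z
        - (if t < 0 then (1:ℝ) else 0) * {z : ℝ × ℝ | s < z.1}.indicator (fun _ => (1:ℝ)) z
        - (if s < 0 then (1:ℝ) else 0) * {z : ℝ × ℝ | t < z.2}.indicator (fun _ => (1:ℝ)) z) σ :=
    hAB.sub hC
  rw [integral_congr_ae (ae_of_all _ hpt),
    integral_add hABC (integrable_const _),
    integral_sub hAB hC, integral_sub hA hB,
    integral_const_mul, integral_const_mul, integral_const,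
    integral_indicator_const (1:ℝ) hE, integral_indicator_const (1:ℝ) hE1,
    integral_indicator_const (1:ℝ) hE2]
  simp [measure_univ, Measure.real]


/-! ### Fubini for the double-phi integrand -/

lemma measurable_G :
    Measurable (fun p : (ℝ × ℝ) × (ℝ × ℝ) => phi p.1.1 p.2.1 * phi p.1.2 p.2.2) := by
  have m1 : Measurable fun p : (ℝ × ℝ) × (ℝ × ℝ) => phi p.1.1 p.2.1 :=
    measurable_phi.comp (measurable_fst.fst.prodMk measurable_snd.fst)
  have m2 : Measurable fun p : (ℝ × ℝ) × (ℝ × ℝ) => phi p.1.2 p.2.2 :=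
    measurable_phi.comp (measurable_fst.snd.prodMk measurable_snd.snd)
  exact m1.mul m2

lemma lintegral_sq_lt_top {σ : Measure (ℝ × ℝ)}
    (hx2 : Integrable (fun z : ℝ × ℝ => z.1 ^ 2) σ) :
    ∫⁻ z, ENNReal.ofReal (z.1 ^ 2) ∂σ < ∞ := by
  have h := hx2.hasFiniteIntegral
  rw [hasFiniteIntegral_iff_norm] at h
  simpa [Real.norm_eq_abs, abs_pow, sq_abs] using h

lemma lintegral_sq_snd_lt_top {σ : Measure (ℝ × ℝ)}
    (hy2 : Integrable (fun z : ℝ × ℝ => z.2 ^ 2) σ) :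
    ∫⁻ z, ENNReal.ofReal (z.2 ^ 2) ∂σ < ∞ := by
  have h := hy2.hasFiniteIntegral
  rw [hasFiniteIntegral_iff_norm] at h
  simpa [Real.norm_eq_abs, abs_pow, sq_abs] using h

lemma integrable_G {σ : Measure (ℝ × ℝ)} [IsProbabilityMeasure σ]
    (hx2 : Integrable (fun z : ℝ × ℝ => z.1 ^ 2) σ)
    (hy2 : Integrable (fun z : ℝ × ℝ => z.2 ^ 2) σ) :
    Integrable (fun p : (ℝ × ℝ) × (ℝ × ℝ) => phi p.1.1 p.2.1 * phi p.1.2 p.2.2)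
      (σ.prod (volume.prod volume)) := by
  refine ⟨measurable_G.aestronglyMeasurable, ?_⟩
  rw [hasFiniteIntegral_iff_norm]
  have habs : ∀ p : (ℝ × ℝ) × (ℝ × ℝ), ENNReal.ofReal ‖phi p.1.1 p.2.1 * phi p.1.2 p.2.2‖
      = ENNReal.ofReal |phi p.1.1 p.2.1| * ENNReal.ofReal |phi p.1.2 p.2.2| := by
    intro p
    rw [Real.norm_eq_abs, abs_mul, ENNReal.ofReal_mul (abs_nonneg _)]
  have hmeas_abs : AEMeasurable (fun p : (ℝ × ℝ) × (ℝ × ℝ) =>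
      ENNReal.ofReal ‖phi p.1.1 p.2.1 * phi p.1.2 p.2.2‖) (σ.prod (volume.prod volume)) :=
    (ENNReal.measurable_ofReal.comp measurable_G.norm).aemeasurable
  calc ∫⁻ p, ENNReal.ofReal ‖phi p.1.1 p.2.1 * phi p.1.2 p.2.2‖ ∂(σ.prod (volume.prod volume))
      = ∫⁻ z, ∫⁻ st, ENNReal.ofReal ‖phi z.1 st.1 * phi z.2 st.2‖
          ∂(volume.prod volume) ∂σ :=
        lintegral_prod _ hmeas_abs
    _ = ∫⁻ z, ENNReal.ofReal |z.1| * ENNReal.ofReal |z.2| ∂σ := by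
        refine lintegral_congr fun z => ?_
        have : ∀ st : ℝ × ℝ, ENNReal.ofReal ‖phi z.1 st.1 * phi z.2 st.2‖
            = ENNReal.ofReal |phi z.1 st.1| * ENNReal.ofReal |phi z.2 st.2| := fun st => by
          rw [Real.norm_eq_abs, abs_mul, ENNReal.ofReal_mul (abs_nonneg _)]
        simp_rw [this]
        have hm1 : Measurable fun s : ℝ => ENNReal.ofReal |phi z.1 s| := by
          have hp : Measurable fun s : ℝ => phi z.1 s :=
            measurable_phi.comp (measurable_const.prodMk measurable_id)
          exact hp.abs.ennreal_ofReal
        have hm2 : Measurable fun s : ℝ => ENNReal.ofReal |phi z.2 s| := by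
          have hp : Measurable fun s : ℝ => phi z.2 s :=
            measurable_phi.comp (measurable_const.prodMk measurable_id)
          exact hp.abs.ennreal_ofReal
        rw [lintegral_prod_mul (f := fun s => ENNReal.ofReal |phi z.1 s|)
          (g := fun t => ENNReal.ofReal |phi z.2 t|) hm1.aemeasurable hm2.aemeasurable,
          lintegral_abs_phi, lintegral_abs_phi]
    _ ≤ ∫⁻ z, (ENNReal.ofReal (z.1 ^ 2) + ENNReal.ofReal (z.2 ^ 2)) ∂σ := by
        refine lintegral_mono fun z => ?_
        rw [← ENNReal.ofReal_mul (abs_nonneg _), ← ENNReal.ofReal_add (sq_nonneg _) (sq_nonneg _)]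
        refine ENNReal.ofReal_le_ofReal ?_
        nlinarith [sq_nonneg (|z.1| - |z.2|), sq_abs z.1, sq_abs z.2,
          mul_nonneg (abs_nonneg z.1) (abs_nonneg z.2)]
    _ < ∞ := by
        have hm : Measurable fun z : ℝ × ℝ => ENNReal.ofReal (z.1 ^ 2) := by
          have hp : Measurable fun z : ℝ × ℝ => z.1 ^ 2 :=
            ((continuous_pow 2).measurable.comp measurable_fst)
          exact hp.ennreal_ofReal
        rw [lintegral_add_left hm]
        exact ENNReal.add_lt_top.2 ⟨lintegral_sq_lt_top hx2, lintegral_sq_snd_lt_top hy2⟩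

lemma integral_mul_eq_double {σ : Measure (ℝ × ℝ)} [IsProbabilityMeasure σ]
    (hx2 : Integrable (fun z : ℝ × ℝ => z.1 ^ 2) σ)
    (hy2 : Integrable (fun z : ℝ × ℝ => z.2 ^ 2) σ) :
    ∫ z : ℝ × ℝ, z.1 * z.2 ∂σ
      = ∫ st : ℝ × ℝ, (∫ z : ℝ × ℝ, phi z.1 st.1 * phi z.2 st.2 ∂σ)
          ∂(volume.prod volume) := by
  have hG := integrable_G hx2 hy2
  have step1 : ∀ z : ℝ × ℝ, z.1 * z.2
      = ∫ st : ℝ × ℝ, phi z.1 st.1 * phi z.2 st.2 ∂(volume.prod volume) := by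
    intro z
    rw [integral_prod_mul (f := fun s => phi z.1 s) (g := fun t => phi z.2 t),
      integral_phi, integral_phi]
  calc ∫ z : ℝ × ℝ, z.1 * z.2 ∂σ
      = ∫ z : ℝ × ℝ, (∫ st : ℝ × ℝ, phi z.1 st.1 * phi z.2 st.2 ∂(volume.prod volume)) ∂σ :=
        integral_congr_ae (ae_of_all _ step1)
    _ = ∫ st : ℝ × ℝ, (∫ z : ℝ × ℝ, phi z.1 st.1 * phi z.2 st.2 ∂σ)
          ∂(volume.prod volume) :=
        integral_integral_swap (f := fun (z st : ℝ × ℝ) => phi z.1 st.1 * phi z.2 st.2) hG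

lemma preimage_fst_Ioi {σ : Measure (ℝ × ℝ)} {μ : Measure ℝ}
    (hσ1 : σ.map Prod.fst = μ) (s : ℝ) : σ {z : ℝ × ℝ | s < z.1} = μ (Ioi s) := by
  rw [← hσ1, Measure.map_apply measurable_fst measurableSet_Ioi]
  rfl

lemma preimage_snd_Ioi {σ : Measure (ℝ × ℝ)} {ν : Measure ℝ}
    (hσ2 : σ.map Prod.snd = ν) (t : ℝ) : σ {z : ℝ × ℝ | t < z.2} = ν (Ioi t) := by
  rw [← hσ2, Measure.map_apply measurable_snd measurableSet_Ioi]
  rfl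

lemma integral_mul_le_of_quadrant_le {μ ν : Measure ℝ} {σ σ' : Measure (ℝ × ℝ)}
    [IsProbabilityMeasure σ] [IsProbabilityMeasure σ']
    (hσ1 : σ.map Prod.fst = μ) (hσ2 : σ.map Prod.snd = ν)
    (hσ'1 : σ'.map Prod.fst = μ) (hσ'2 : σ'.map Prod.snd = ν)
    (hx2 : Integrable (fun z : ℝ × ℝ => z.1 ^ 2) σ)
    (hy2 : Integrable (fun z : ℝ × ℝ => z.2 ^ 2) σ)
    (hx2' : Integrable (fun z : ℝ × ℝ => z.1 ^ 2) σ')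
    (hy2' : Integrable (fun z : ℝ × ℝ => z.2 ^ 2) σ')
    (hcomp : ∀ s t : ℝ, σ {z : ℝ × ℝ | s < z.1 ∧ t < z.2}
      ≤ σ' {z : ℝ × ℝ | s < z.1 ∧ t < z.2}) :
    ∫ z : ℝ × ℝ, z.1 * z.2 ∂σ ≤ ∫ z : ℝ × ℝ, z.1 * z.2 ∂σ' := by
  have hG := integrable_G hx2 hy2
  have hG' := integrable_G hx2' hy2'
  rw [integral_mul_eq_double hx2 hy2, integral_mul_eq_double hx2' hy2']
  refine integral_mono (hG.integral_prod_right) (hG'.integral_prod_right) fun st => ?_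
  rw [integral_phi_mul σ st.1 st.2, integral_phi_mul σ' st.1 st.2,
    preimage_fst_Ioi hσ1, preimage_snd_Ioi hσ2, preimage_fst_Ioi hσ'1, preimage_snd_Ioi hσ'2]
  have hq : (σ {z : ℝ × ℝ | st.1 < z.1 ∧ st.2 < z.2}).toReal
      ≤ (σ' {z : ℝ × ℝ | st.1 < z.1 ∧ st.2 < z.2}).toReal :=
    ENNReal.toReal_mono (measure_ne_top σ' _) (hcomp st.1 st.2)
  linarith


/-! ### The monotone (optimal) coupling -/

lemma upperWithin_total {f g : ℝ → ℝ} (hf : MonotoneOn f (Ioo 0 1))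
    (hg : MonotoneOn g (Ioo 0 1)) (s t : ℝ) :
    ({u : ℝ | s < f u} ∩ Ioo 0 1 ⊆ {u : ℝ | t < g u} ∩ Ioo 0 1)
      ∨ ({u : ℝ | t < g u} ∩ Ioo 0 1 ⊆ {u : ℝ | s < f u} ∩ Ioo 0 1) := by
  by_contra h
  push_neg at h
  obtain ⟨h1, h2⟩ := h
  obtain ⟨a, ha, hna⟩ := Set.not_subset.1 h1
  obtain ⟨b, hb, hnb⟩ := Set.not_subset.1 h2
  rcases le_total a b with hab | hab
  · exact hnb ⟨lt_of_lt_of_le ha.1 (hf ha.2 hb.2 hab), hb.2⟩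
  · exact hna ⟨lt_of_lt_of_le hb.1 (hg hb.2 ha.2 hab), ha.2⟩

variable (ν : Measure ℝ) [IsProbabilityMeasure ν]

lemma aemeasurable_T :
    AEMeasurable (fun u => (quantileFun μ u, quantileFun ν u))
      (volume.restrict (Ioo (0:ℝ) 1)) :=
  (aemeasurable_quantile μ).prodMk (aemeasurable_quantile ν)

lemma optCoupling_fst :
    ((volume.restrict (Ioo (0:ℝ) 1)).map
      (fun u => (quantileFun μ u, quantileFun ν u))).map Prod.fst = μ := by
  rw [AEMeasurable.map_map_of_aemeasurable measurable_fst.aemeasurable (aemeasurable_T μ ν)]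
  exact map_quantile μ

lemma optCoupling_snd :
    ((volume.restrict (Ioo (0:ℝ) 1)).map
      (fun u => (quantileFun μ u, quantileFun ν u))).map Prod.snd = ν := by
  rw [AEMeasurable.map_map_of_aemeasurable measurable_snd.aemeasurable (aemeasurable_T μ ν)]
  exact map_quantile ν

lemma quadrant_le_opt {σ : Measure (ℝ × ℝ)}
    (hσ1 : σ.map Prod.fst = μ) (hσ2 : σ.map Prod.snd = ν) (s t : ℝ) :
    σ {z : ℝ × ℝ | s < z.1 ∧ t < z.2}
      ≤ ((volume.restrict (Ioo (0:ℝ) 1)).map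
          (fun u => (quantileFun μ u, quantileFun ν u))) {z : ℝ × ℝ | s < z.1 ∧ t < z.2} := by
  have hT := aemeasurable_T μ ν
  have hE1 : MeasurableSet {z : ℝ × ℝ | s < z.1} := measurable_fst measurableSet_Ioi
  have hE2 : MeasurableSet {z : ℝ × ℝ | t < z.2} := measurable_snd measurableSet_Ioi
  have e0 : ((volume.restrict (Ioo (0:ℝ) 1)).map
        (fun u => (quantileFun μ u, quantileFun ν u))) {z : ℝ × ℝ | s < z.1 ∧ t < z.2}
      = volume (({u : ℝ | s < quantileFun μ u} ∩ {u : ℝ | t < quantileFun ν u}) ∩ Ioo 0 1) := by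
    rw [Measure.map_apply_of_aemeasurable hT (measurableSet_quadrant s t),
      Measure.restrict_apply' measurableSet_Ioo]
    rfl
  have eA : volume ({u : ℝ | s < quantileFun μ u} ∩ Ioo (0:ℝ) 1) = μ (Ioi s) := by
    have h := preimage_fst_Ioi (optCoupling_fst μ ν) s
    rwa [Measure.map_apply_of_aemeasurable hT hE1,
      Measure.restrict_apply' measurableSet_Ioo] at h
  have eB : volume ({u : ℝ | t < quantileFun ν u} ∩ Ioo (0:ℝ) 1) = ν (Ioi t) := by
    have h := preimage_snd_Ioi (optCoupling_snd μ ν) t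
    rwa [Measure.map_apply_of_aemeasurable hT hE2,
      Measure.restrict_apply' measurableSet_Ioo] at h
  have hEs : σ {z : ℝ × ℝ | s < z.1 ∧ t < z.2} ≤ μ (Ioi s) := by
    rw [← preimage_fst_Ioi hσ1 s]
    exact measure_mono fun z hz => hz.1
  have hEt : σ {z : ℝ × ℝ | s < z.1 ∧ t < z.2} ≤ ν (Ioi t) := by
    rw [← preimage_snd_Ioi hσ2 t]
    exact measure_mono fun z hz => hz.2
  have hre : ({u : ℝ | s < quantileFun μ u} ∩ {u : ℝ | t < quantileFun ν u}) ∩ Ioo (0:ℝ) 1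
      = ({u : ℝ | s < quantileFun μ u} ∩ Ioo 0 1) ∩ ({u : ℝ | t < quantileFun ν u} ∩ Ioo 0 1) := by
    ext u
    simp only [mem_inter_iff, mem_setOf_eq]
    tauto
  rw [e0, hre]
  rcases upperWithin_total (quantile_monotoneOn μ) (quantile_monotoneOn ν) s t with hsub | hsub
  · rw [inter_eq_left.mpr hsub, eA]
    exact hEs
  · rw [inter_eq_right.mpr hsub, eB]
    exact hEt

end OneDOT

open OneDOT Set in
/-- for probability measures `μ, ν` on `ℝ` with finite second moments,
the optimal value of the 1D quadratic optimal transport problem equals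
`∫₀¹ (F_μ⁻¹(s) − F_ν⁻¹(s))² ds`. -/
theorem oneD_optimal_transport_value (μ ν : Measure ℝ)
    [IsProbabilityMeasure μ] [IsProbabilityMeasure ν]
    (hμ : Integrable (fun x => x ^ 2) μ) (hν : Integrable (fun x => x ^ 2) ν) :
    sInf {c : ℝ | ∃ σ : Measure (ℝ × ℝ),
        σ.map Prod.fst = μ ∧ σ.map Prod.snd = ν ∧
        c = ∫ z : ℝ × ℝ, (z.1 - z.2) ^ 2 ∂σ} =
      ∫ s in Set.Ioo (0 : ℝ) 1, (quantileFun μ s - quantileFun ν s) ^ 2 := by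
  classical
  have hT := aemeasurable_T μ ν
  set σstar : Measure (ℝ × ℝ) := (volume.restrict (Ioo (0:ℝ) 1)).map
    (fun u => (quantileFun μ u, quantileFun ν u)) with hσstar
  have hm1 : σstar.map Prod.fst = μ := optCoupling_fst μ ν
  have hm2 : σstar.map Prod.snd = ν := optCoupling_snd μ ν
  haveI hPs : IsProbabilityMeasure σstar := coupling_isProb μ hm1
  have hx2s : Integrable (fun z : ℝ × ℝ => z.1 ^ 2) σstar :=
    coupling_integrable_sq_fst μ hm1 hμ
  have hy2s : Integrable (fun z : ℝ × ℝ => z.2 ^ 2) σstar :=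
    coupling_integrable_sq_snd ν hm2 hν
  have hsq : ∀ (τ : Measure (ℝ × ℝ)), τ.map Prod.fst = μ →
      ∫ z : ℝ × ℝ, z.1 ^ 2 ∂τ = ∫ x, x ^ 2 ∂μ := by
    intro τ hτ
    rw [← hτ, integral_map measurable_fst.aemeasurable
      ((continuous_pow 2).aestronglyMeasurable)]
  have hsq' : ∀ (τ : Measure (ℝ × ℝ)), τ.map Prod.snd = ν →
      ∫ z : ℝ × ℝ, z.2 ^ 2 ∂τ = ∫ x, x ^ 2 ∂ν := by
    intro τ hτ
    rw [← hτ, integral_map measurable_snd.aemeasurable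
      ((continuous_pow 2).aestronglyMeasurable)]
  have hcstar : ∫ z : ℝ × ℝ, (z.1 - z.2) ^ 2 ∂σstar
      = ∫ s in Set.Ioo (0 : ℝ) 1, (quantileFun μ s - quantileFun ν s) ^ 2 := by
    rw [hσstar, integral_map hT (f := fun z : ℝ × ℝ => (z.1 - z.2) ^ 2) (((continuous_fst.sub continuous_snd).pow 2).aestronglyMeasurable)]
  have hmemstar : (∫ s in Set.Ioo (0 : ℝ) 1, (quantileFun μ s - quantileFun ν s) ^ 2)
      ∈ {c : ℝ | ∃ σ : Measure (ℝ × ℝ),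
        σ.map Prod.fst = μ ∧ σ.map Prod.snd = ν ∧
        c = ∫ z : ℝ × ℝ, (z.1 - z.2) ^ 2 ∂σ} :=
    ⟨σstar, hm1, hm2, hcstar.symm⟩
  have hbdd : BddBelow {c : ℝ | ∃ σ : Measure (ℝ × ℝ),
      σ.map Prod.fst = μ ∧ σ.map Prod.snd = ν ∧
      c = ∫ z : ℝ × ℝ, (z.1 - z.2) ^ 2 ∂σ} := by
    refine ⟨0, ?_⟩
    rintro c ⟨σ, h1, h2, rfl⟩
    exact integral_nonneg fun z => sq_nonneg _
  refine le_antisymm (csInf_le hbdd hmemstar) (le_csInf ⟨_, hmemstar⟩ ?_)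
  rintro c ⟨σ, h1, h2, rfl⟩
  haveI : IsProbabilityMeasure σ := coupling_isProb μ h1
  have hx2 : Integrable (fun z : ℝ × ℝ => z.1 ^ 2) σ := coupling_integrable_sq_fst μ h1 hμ
  have hy2 : Integrable (fun z : ℝ × ℝ => z.2 ^ 2) σ := coupling_integrable_sq_snd ν h2 hν
  have hmul : ∫ z : ℝ × ℝ, z.1 * z.2 ∂σ ≤ ∫ z : ℝ × ℝ, z.1 * z.2 ∂σstar :=
    integral_mul_le_of_quadrant_le h1 h2 hm1 hm2 hx2 hy2 hx2s hy2s
      (fun s t => quadrant_le_opt μ ν h1 h2 s t)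
  rw [← hcstar, integral_sq_sub hx2 hy2, integral_sq_sub hx2s hy2s,
    hsq σ h1, hsq σstar hm1, hsq' σ h2, hsq' σstar hm2]
  linarith
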